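/- Dalmatian substitution lemma: Let K, L be CRGs with K 0-core, and fix n ∈ ℕ. Let m ∈ ℕ and let μ be a probability mass on V(L) with m·μ(x) ≥ n for every black vertex x of L. Suppose K has s white vertices, L has t white vertices, s > t, and n × K ⊑ L[μ,m]. Then for every integer 1 ≤ r ≤ s − t, also n × Kⁿ(r) ⊑ L[μ,m], where Kⁿ(r) is obtained from K by replacing r of its white vertices by sets of n black vertices joined pairwise by white edges (and retaining all other adjacencies, with the new black vertices inheriting the edges of the replaced white vertex). -/

import Mathlib

open Finset

inductive EColor | white | black | gray
deriving DecidableEq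

/-- The `p`-weight of an edge color: `p` for white, `1-p` for black, `0` for gray. -/
def wval (p : ℝ) : EColor → ℝ
  | .white => p
  | .black => 1 - p
  | .gray => 0

/-- The matrix `M_K(p)` of a CRG given by vertex colors `vb` (`true` = black)
and edge colors `ec`. -/
def Mmat {V : Type*} [DecidableEq V] (vb : V → Bool) (ec : V → V → EColor) (p : ℝ)
    (x y : V) : ℝ :=
  if x = y then (if vb x then 1 - p else p) else wval p (ec x y)

/-- `μ` is a probability mass. -/
def IsProb {V : Type*} [Fintype V] (μ : V → ℝ) : Prop :=
  (∀ x, 0 ≤ μ x) ∧ ∑ x, μ x = 1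

/-- The quadratic form `⟨μ, M_K(p) μ⟩`. -/
def QF {V : Type*} [Fintype V] [DecidableEq V] (vb : V → Bool) (ec : V → V → EColor)
    (p : ℝ) (μ : V → ℝ) : ℝ :=
  ∑ x, ∑ y, μ x * Mmat vb ec p x y * μ y

/-- `g` is the minimum of the quadratic form over probability masses, i.e. `g = g_K(p)`. -/
def gIs {V : Type*} [Fintype V] [DecidableEq V] (vb : V → Bool) (ec : V → V → EColor)
    (p g : ℝ) : Prop :=
  IsLeast {t | ∃ μ : V → ℝ, IsProb μ ∧ t = QF vb ec p μ} g

/-- The weighted gray-degree `d_G(u) = ∑_{v : uv gray} μ(v)`. -/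
def grayDeg {V : Type*} [Fintype V] [DecidableEq V] (ec : V → V → EColor) (μ : V → ℝ)
    (u : V) : ℝ :=
  ∑ v ∈ Finset.univ.filter (fun v => v ≠ u ∧ ec u v = EColor.gray), μ v

/-- Colored-graph containment `G ⊑ H` between edge-colorings. -/
def SubCG {A B : Type*} (e1 : A → A → EColor) (e2 : B → B → EColor) : Prop :=
  ∃ φ : A → B, Function.Injective φ ∧ ∀ a b, a ≠ b →
    (e1 a b = EColor.black → (e2 (φ a) (φ b) = EColor.black ∨ e2 (φ a) (φ b) = EColor.gray)) ∧
    (e1 a b = EColor.white → (e2 (φ a) (φ b) = EColor.white ∨ e2 (φ a) (φ b) = EColor.gray)) ∧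
    (e1 a b = EColor.gray → e2 (φ a) (φ b) = EColor.gray)

/-- The `m`-fold blow-up `m × K` of a CRG as a colored graph. -/
def blowup {V : Type*} [DecidableEq V] (vb : V → Bool) (ec : V → V → EColor) (m : ℕ) :
    V × Fin m → V × Fin m → EColor :=
  fun x y => if x.1 = y.1 then (if vb x.1 then EColor.black else EColor.white)
    else ec x.1 y.1

/-- The blow-up `L[μ,m]` of a CRG, where vertex `x` becomes `⌊μ(x)·m⌋` vertices. -/
def sblow {V : Type*} [DecidableEq V] (vb : V → Bool) (ec : V → V → EColor) (μ : V → ℝ)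
    (m : ℕ) : ((x : V) × Fin ⌊μ x * (m : ℝ)⌋₊) → ((x : V) × Fin ⌊μ x * (m : ℝ)⌋₊) → EColor :=
  fun a b => if a.1 = b.1 then (if vb a.1 then EColor.black else EColor.white)
    else ec a.1 b.1

/-- The vertex type of `Kⁿ(r)`: the white vertices in `R` are replaced by dalmatian sets of
`n` black vertices. -/
abbrev dalmType (V : Type*) (R : Finset V) (n : ℕ) : Type _ :=
  {v : V // v ∉ R} ⊕ ({v : V // v ∈ R} × Fin n)

/-- Vertex colors of `Kⁿ(r)`: the new dalmatian vertices are black. -/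
def dalmVB {V : Type*} (vb : V → Bool) (R : Finset V) (n : ℕ) : dalmType V R n → Bool
  | .inl a => vb a.1
  | .inr _ => true

/-- Edge colors of `Kⁿ(r)`: inside a dalmatian set edges are white; a dalmatian vertex
inherits the edges of the white vertex it replaces. -/
def dalmEC {V : Type*} [DecidableEq V] (ec : V → V → EColor) (R : Finset V) (n : ℕ) :
    dalmType V R n → dalmType V R n → EColor
  | .inl a, .inl b => ec a.1 b.1
  | .inl a, .inr x => ec a.1 x.1.1
  | .inr x, .inl b => ec x.1.1 b.1
  | .inr x, .inr y => if x.1.1 = y.1.1 then EColor.white else ec x.1.1 y.1.1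

/-- dalmatian substitution: let `K` be 0-core with `s` white vertices, `L` a
CRG with `t < s` white vertices, `μ` a probability mass on `V(L)` with `m·μ(x) ≥ n` for
every black `x`.  If `n × K ⊑ L[μ,m]`, then for every set `R` of `r` white vertices of `K`
with `1 ≤ r ≤ s − t`, also `n × Kⁿ(r) ⊑ L[μ,m]`. -/
theorem stmt17 {V W : Type*} [Fintype V] [DecidableEq V] [Fintype W] [DecidableEq W]
    (vbK : V → Bool) (ecK : V → V → EColor) (hsymmK : ∀ a b, ecK a b = ecK b a)
    (hnbK : ∀ x y, x ≠ y → ecK x y ≠ EColor.black)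
    (hweK : ∀ x y, x ≠ y → ecK x y = EColor.white → vbK x = true ∧ vbK y = true)
    (vbL : W → Bool) (ecL : W → W → EColor)
    (n m : ℕ) (μ : W → ℝ) (hμ : IsProb μ)
    (hm : ∀ x, vbL x = true → (n : ℝ) ≤ (m : ℝ) * μ x)
    (s t : ℕ)
    (hs : (Finset.univ.filter fun x => vbK x = false).card = s)
    (ht : (Finset.univ.filter fun x => vbL x = false).card = t)
    (hst : t < s)
    (hemb : SubCG (blowup vbK ecK n) (sblow vbL ecL μ m))
    (r : ℕ) (hr1 : 1 ≤ r) (hr2 : r ≤ s - t)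
    (R : Finset V) (hRcard : R.card = r) (hRwhite : ∀ x ∈ R, vbK x = false) :
    SubCG (blowup (dalmVB vbK R n) (dalmEC ecK R n) n) (sblow vbL ecL μ m) := by
    classical
  obtain ⟨φ, hφinj, hφedge⟩ := hemb
  rcases Nat.eq_zero_or_pos n with hn0 | hn
  · subst hn0
    exact ⟨fun z => z.2.elim0, fun a => a.2.elim0, fun a => a.2.elim0⟩
  -- W is nonempty
  have hWne : Nonempty W := by
    rcases isEmpty_or_nonempty W with h | h
    · exfalso
      have := hμ.2
      simp [Finset.univ_eq_empty] at this
    · exact h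
  obtain ⟨w₀⟩ := hWne
  -- basic color facts about K
  have grayK : ∀ x y : V, x ≠ y → vbK x = false → ecK x y = EColor.gray := by
    intro x y hxy hx
    cases h : ecK x y with
    | black => exact absurd h (hnbK x y hxy)
    | white =>
        have := (hweK x y hxy h).1
        rw [hx] at this; cases this
    | gray => rfl
  have grayK' : ∀ x y : V, x ≠ y → vbK y = false → ecK x y = EColor.gray :=
    fun x y hxy hy => (hsymmK x y).trans (grayK y x (Ne.symm hxy) hy)
  -- decoding sblow colors
  have sgray : ∀ a b, sblow vbL ecL μ m a b = EColor.gray →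
      a.1 ≠ b.1 ∧ ecL a.1 b.1 = EColor.gray := by
    intro a b h
    by_cases hab : a.1 = b.1
    · exfalso
      cases hv : vbL a.1 <;> simp [sblow, hab, hv] at h <;> simp [← hab, hv] at h
    · exact ⟨hab, by simpa [sblow, hab] using h⟩
  -- key consequences of the embedding φ
  have F1 : ∀ (g g' : V) (k k' : Fin n), g ≠ g' → ecK g g' = EColor.gray →
      (φ (g, k)).1 ≠ (φ (g', k')).1 ∧ ecL (φ (g, k)).1 (φ (g', k')).1 = EColor.gray := by
    intro g g' k k' hgg hec
    have hne : (g, k) ≠ (g', k') := by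
      intro h; exact hgg (congrArg Prod.fst h)
    have hcol : blowup vbK ecK n (g, k) (g', k') = EColor.gray := by
      simp [blowup, hgg, hec]
    have := (hφedge _ _ hne).2.2 hcol
    exact sgray _ _ this
  have F2 : ∀ (g : V) (k k' : Fin n), k ≠ k' → vbK g = false →
      (∀ j : Fin n, vbL (φ (g, j)).1 = true) →
      (φ (g, k)).1 ≠ (φ (g, k')).1 ∧
        (ecL (φ (g, k)).1 (φ (g, k')).1 = EColor.white ∨
         ecL (φ (g, k)).1 (φ (g, k')).1 = EColor.gray) := by
    intro g k k' hkk hw hblack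
    have hne : (g, k) ≠ (g, k') := by
      intro h; exact hkk (congrArg Prod.snd h)
    have hcol : blowup vbK ecK n (g, k) (g, k') = EColor.white := by
      simp [blowup, hw]
    have hwg := (hφedge _ _ hne).2.1 hcol
    have hcls : (φ (g, k)).1 ≠ (φ (g, k')).1 := by
      intro hEq
      rcases hwg with h | h <;>
      · rw [sblow, if_pos hEq, hblack k] at h
        simp at h
    refine ⟨hcls, ?_⟩
    rcases hwg with h | h
    · left; rwa [sblow, if_neg hcls] at h
    · right; rwa [sblow, if_neg hcls] at h
  -- the good white vertices of K: all copies go to black classes of L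
  set Good : Finset V := univ.filter
      (fun g => vbK g = false ∧ ∀ k : Fin n, vbL (φ (g, k)).1 = true) with hGoodDef
  have hGoodWhite : ∀ g ∈ Good, vbK g = false := by
    intro g hg; exact (Finset.mem_filter.mp hg).2.1
  have hGoodBlack : ∀ g ∈ Good, ∀ k : Fin n, vbL (φ (g, k)).1 = true := by
    intro g hg; exact (Finset.mem_filter.mp hg).2.2
  -- cardinality bound
  have hGoodcard : r ≤ Good.card := by
    have hWK : (univ.filter fun x => vbK x = false) =
        Good ∪ ((univ.filter fun x => vbK x = false) \ Good) := by
      apply Finset.ext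
      intro x
      simp only [Finset.mem_union, Finset.mem_sdiff, Finset.mem_filter, Finset.mem_univ,
        true_and, hGoodDef]
      tauto
    set Bad := (univ.filter fun x => vbK x = false) \ Good with hBadDef
    have hBadmem : ∀ g ∈ Bad, vbK g = false ∧ ∃ k : Fin n, vbL (φ (g, k)).1 = false := by
      intro g hg
      rw [hBadDef, Finset.mem_sdiff, Finset.mem_filter] at hg
      refine ⟨hg.1.2, ?_⟩
      by_contra hcon
      push_neg at hcon
      exact hg.2 (Finset.mem_filter.mpr ⟨Finset.mem_univ g,
        hg.1.2, fun k => by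
          cases h : vbL (φ (g, k)).1 with
          | false => exact absurd h (hcon k)
          | true => rfl⟩)
    have hBadcard : Bad.card ≤ t := by
      rw [← ht]
      set f : V → W := fun g =>
        if h : ∃ k : Fin n, vbL (φ (g, k)).1 = false then (φ (g, h.choose)).1 else w₀ with hfDef
      apply Finset.card_le_card_of_injOn f
      · intro g hg
        obtain ⟨hgw, hex⟩ := hBadmem g hg
        rw [hfDef]
        simp only [dif_pos hex]
        exact Finset.mem_filter.mpr ⟨Finset.mem_univ _, hex.choose_spec⟩
      · intro g hg g' hg' hEq
        by_contra hgg
        obtain ⟨hgw, hex⟩ := hBadmem g (by simpa using hg)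
        obtain ⟨hgw', hex'⟩ := hBadmem g' (by simpa using hg')
        rw [hfDef] at hEq
        simp only [dif_pos hex, dif_pos hex'] at hEq
        exact (F1 g g' hex.choose hex'.choose hgg (grayK _ _ hgg hgw)).1 hEq
    have hs' : s ≤ Good.card + t := by
      calc s = (univ.filter fun x => vbK x = false).card := hs.symm
        _ ≤ Good.card + Bad.card := by
            rw [hWK]; exact (Finset.card_union_le _ _)
        _ ≤ Good.card + t := by omega
    omega
  -- choose the target set T ⊆ Good with |T| = r, and the permutation σ
  obtain ⟨T, hTsub, hTcard⟩ := Finset.exists_subset_card_eq hGoodcard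
  have hRT : (R \ T).card = (T \ R).card :=
    Finset.card_sdiff_comm (by rw [hRcard, hTcard])
  set e := Finset.equivOfCardEq hRT with heDef
  set σ : V → V := fun x =>
    if hx : x ∈ R \ T then (e ⟨x, hx⟩).1
    else if hx' : x ∈ T \ R then (e.symm ⟨x, hx'⟩).1 else x with hσDef
  have hσ1 : ∀ x (hx : x ∈ R \ T), σ x = (e ⟨x, hx⟩).1 := by
    intro x hx; rw [hσDef]; simp only [dif_pos hx]
  have hσ2 : ∀ x (hx' : x ∈ T \ R) (hx : x ∉ R \ T), σ x = (e.symm ⟨x, hx'⟩).1 := by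
    intro x hx' hx; rw [hσDef]; simp only [dif_neg hx, dif_pos hx']
  have hσ3 : ∀ x, x ∉ R \ T → x ∉ T \ R → σ x = x := by
    intro x h1 h2; rw [hσDef]; simp only [dif_neg h1, dif_neg h2]
  have hσσ : ∀ x, σ (σ x) = x := by
    intro x
    by_cases hx : x ∈ R \ T
    · rw [hσ1 x hx]
      have hy : ((e ⟨x, hx⟩ : {z // z ∈ T \ R}) : V) ∈ T \ R := (e ⟨x, hx⟩).2
      have hy' : ((e ⟨x, hx⟩ : {z // z ∈ T \ R}) : V) ∉ R \ T := by
        intro h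
        exact (Finset.mem_sdiff.mp h).2 (Finset.mem_sdiff.mp hy).1
      rw [hσ2 _ hy hy']
      have : (⟨(e ⟨x, hx⟩ : {z // z ∈ T \ R}), hy⟩ : {z // z ∈ T \ R}) = e ⟨x, hx⟩ := rfl
      rw [this, Equiv.symm_apply_apply]
    · by_cases hx' : x ∈ T \ R
      · rw [hσ2 x hx' hx]
        have hy : ((e.symm ⟨x, hx'⟩ : {z // z ∈ R \ T}) : V) ∈ R \ T := (e.symm ⟨x, hx'⟩).2
        rw [hσ1 _ hy]
        have : (⟨(e.symm ⟨x, hx'⟩ : {z // z ∈ R \ T}), hy⟩ : {z // z ∈ R \ T}) =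
            e.symm ⟨x, hx'⟩ := rfl
        rw [this, Equiv.apply_symm_apply]
      · rw [hσ3 x hx hx', hσ3 x hx hx']
  have hσinj : Function.Injective σ := by
    intro a b h
    have := congrArg σ h
    rwa [hσσ, hσσ] at this
  have hσR : ∀ x ∈ R, σ x ∈ T := by
    intro x hx
    by_cases h1 : x ∈ R \ T
    · rw [hσ1 x h1]
      exact (Finset.mem_sdiff.mp (e ⟨x, h1⟩).2).1
    · have hxT : x ∈ T := by
        by_contra hc
        exact h1 (Finset.mem_sdiff.mpr ⟨hx, hc⟩)
      rw [hσ3 x h1 (fun h => (Finset.mem_sdiff.mp h).2 hx)]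
      exact hxT
  have hσGood : ∀ x ∈ R, σ x ∈ Good := fun x hx => hTsub (hσR x hx)
  have hσw : ∀ x, vbK (σ x) = vbK x := by
    intro x
    by_cases h1 : x ∈ R \ T
    · rw [hσ1 x h1]
      have hy := (e ⟨x, h1⟩).2
      rw [hGoodWhite _ (hTsub (Finset.mem_sdiff.mp hy).1),
        hRwhite x (Finset.mem_sdiff.mp h1).1]
    · by_cases h2 : x ∈ T \ R
      · rw [hσ2 x h2 h1]
        have hy := (e.symm ⟨x, h2⟩).2
        rw [hRwhite _ (Finset.mem_sdiff.mp hy).1,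
          hGoodWhite _ (hTsub (Finset.mem_sdiff.mp h2).1)]
      · rw [hσ3 x h1 h2]
  have hσec : ∀ a b : V, a ≠ b → ecK (σ a) (σ b) = ecK a b := by
    intro a b hab
    have hσab : σ a ≠ σ b := fun h => hab (hσinj h)
    cases ha : vbK a with
    | false =>
        rw [grayK a b hab ha, grayK (σ a) (σ b) hσab (by rw [hσw, ha])]
    | true =>
        cases hb : vbK b with
        | false =>
            rw [grayK' a b hab hb, grayK' (σ a) (σ b) hσab (by rw [hσw, hb])]
        | true =>
            have hfixa : σ a = a := by
              apply hσ3
              · intro h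
                have := hRwhite a (Finset.mem_sdiff.mp h).1
                rw [ha] at this; cases this
              · intro h
                have := hGoodWhite a (hTsub (Finset.mem_sdiff.mp h).1)
                rw [ha] at this; cases this
            have hfixb : σ b = b := by
              apply hσ3
              · intro h
                have := hRwhite b (Finset.mem_sdiff.mp h).1
                rw [hb] at this; cases this
              · intro h
                have := hGoodWhite b (hTsub (Finset.mem_sdiff.mp h).1)
                rw [hb] at this; cases this
            rw [hfixa, hfixb]
  -- the classes hosting the dalmatian clusters are big black classes
  have hclsBlack : ∀ (x : {v : V // v ∈ R}) (i : Fin n), vbL (φ (σ x.1, i)).1 = true :=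
    fun x i => hGoodBlack _ (hσGood x.1 x.2) i
  have hle : ∀ (x : {v : V // v ∈ R}) (i : Fin n), n ≤ ⌊μ (φ (σ x.1, i)).1 * (m : ℝ)⌋₊ := by
    intro x i
    apply Nat.le_floor
    rw [mul_comm]
    exact hm _ (hclsBlack x i)
  -- define the embedding
  set Φ : (dalmType V R n × Fin n) → ((x : W) × Fin ⌊μ x * (m : ℝ)⌋₊) := fun z =>
    match z with
    | (Sum.inl a, k) => φ (σ a.1, k)
    | (Sum.inr (x, i), k) =>
        ⟨(φ (σ x.1, i)).1, ⟨k.1, Nat.lt_of_lt_of_le k.2 (hle x i)⟩⟩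
    with hΦDef
  have hΦ1 : ∀ (a : {v : V // v ∉ R}) (k : Fin n), Φ (Sum.inl a, k) = φ (σ a.1, k) :=
    fun _ _ => rfl
  have hΦ2 : ∀ (x : {v : V // v ∈ R}) (i : Fin n) (k : Fin n),
      Φ (Sum.inr (x, i), k) =
        ⟨(φ (σ x.1, i)).1, ⟨k.1, Nat.lt_of_lt_of_le k.2 (hle x i)⟩⟩ :=
    fun _ _ _ => rfl
  -- helper constructors for the edge conditions
  have mk_gray : ∀ (c tb : EColor), c = EColor.gray → tb = EColor.gray →
      ((c = EColor.black → tb = EColor.black ∨ tb = EColor.gray) ∧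
       (c = EColor.white → tb = EColor.white ∨ tb = EColor.gray) ∧
       (c = EColor.gray → tb = EColor.gray)) := by
    rintro c tb rfl rfl
    exact ⟨fun h => absurd h (by decide), fun h => absurd h (by decide), fun _ => rfl⟩
  have mk_black : ∀ (c tb : EColor), c = EColor.black → tb = EColor.black →
      ((c = EColor.black → tb = EColor.black ∨ tb = EColor.gray) ∧
       (c = EColor.white → tb = EColor.white ∨ tb = EColor.gray) ∧
       (c = EColor.gray → tb = EColor.gray)) := by
    rintro c tb rfl rfl
    exact ⟨fun _ => Or.inl rfl, fun h => absurd h (by decide), fun h => absurd h (by decide)⟩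
  have mk_wg : ∀ (c tb : EColor), c = EColor.white →
      (tb = EColor.white ∨ tb = EColor.gray) →
      ((c = EColor.black → tb = EColor.black ∨ tb = EColor.gray) ∧
       (c = EColor.white → tb = EColor.white ∨ tb = EColor.gray) ∧
       (c = EColor.gray → tb = EColor.gray)) := by
    rintro c tb rfl htb
    exact ⟨fun h => absurd h (by decide), fun _ => htb,
      fun h => absurd h (by decide)⟩
  refine ⟨Φ, ?_, ?_⟩
  · -- injectivity
    rintro ⟨u, k⟩ ⟨v, k'⟩ h
    match u, v with
    | Sum.inl a, Sum.inl b =>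
        rw [hΦ1, hΦ1] at h
        have := hφinj h
        have h1 : σ a.1 = σ b.1 := congrArg Prod.fst this
        have h2 : k = k' := congrArg Prod.snd this
        have : a = b := Subtype.ext (hσinj h1)
        rw [this, h2]
    | Sum.inl a, Sum.inr ⟨x, i⟩ =>
        exfalso
        rw [hΦ1, hΦ2] at h
        have h1 := congrArg Sigma.fst h
        have hax : a.1 ≠ x.1 := fun hEq => a.2 (hEq ▸ x.2)
        have hσax : σ a.1 ≠ σ x.1 := fun hEq => hax (hσinj hEq)
        exact (F1 _ _ k i hσax (grayK' _ _ hσax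
          (by rw [hσw]; exact hRwhite x.1 x.2))).1 h1
    | Sum.inr ⟨x, i⟩, Sum.inl b =>
        exfalso
        rw [hΦ2, hΦ1] at h
        have h1 := congrArg Sigma.fst h
        have hbx : x.1 ≠ b.1 := fun hEq => b.2 (hEq ▸ x.2)
        have hσbx : σ x.1 ≠ σ b.1 := fun hEq => hbx (hσinj hEq)
        exact (F1 _ _ i k' hσbx (grayK _ _ hσbx
          (by rw [hσw]; exact hRwhite x.1 x.2))).1 h1
    | Sum.inr ⟨x, i⟩, Sum.inr ⟨y, j⟩ =>
        rw [hΦ2, hΦ2] at h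
        have h1 := congrArg Sigma.fst h
        by_cases hxy : x = y
        · subst hxy
          by_cases hij : i = j
          · subst hij
            have h2 := congrArg (fun z : ((x : W) × Fin ⌊μ x * (m : ℝ)⌋₊) => z.2.1) h
            have h3 : k = k' := Fin.ext h2
            rw [h3]
          · exfalso
            have hσij := (F2 (σ x.1) i j hij
              (by rw [hσw]; exact hRwhite x.1 x.2)
              (fun jj => hclsBlack x jj)).1
            exact hσij h1
        · exfalso
          have hxy1 : x.1 ≠ y.1 := fun hEq => hxy (Subtype.ext hEq)
          have hσxy : σ x.1 ≠ σ y.1 := fun hEq => hxy1 (hσinj hEq)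
          exact (F1 _ _ i j hσxy (grayK _ _ hσxy
            (by rw [hσw]; exact hRwhite x.1 x.2))).1 h1
  · -- edge conditions
    rintro ⟨u, k⟩ ⟨v, k'⟩ hne
    match u, v with
    | Sum.inl a, Sum.inl b =>
        by_cases hab : a = b
        · subst hab
          have hkk : k ≠ k' := by
            intro h; exact hne (by rw [h])
          have hpair : (σ a.1, k) ≠ (σ a.1, k') := by
            intro h; exact hkk (congrArg Prod.snd h)
          have hedge := hφedge _ _ hpair
          have hcolEq : blowup (dalmVB vbK R n) (dalmEC ecK R n) n (Sum.inl a, k)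
              (Sum.inl a, k') = blowup vbK ecK n (σ a.1, k) (σ a.1, k') := by
            simp [blowup, dalmVB, hσw]
            split_ifs with h
            exacts [if_pos h, if_neg h]
          rw [hΦ1, hΦ1, hcolEq]
          exact hedge
        · have hab1 : a.1 ≠ b.1 := fun hEq => hab (Subtype.ext hEq)
          have hσab : σ a.1 ≠ σ b.1 := fun hEq => hab1 (hσinj hEq)
          have hpair : (σ a.1, k) ≠ (σ b.1, k') := by
            intro h; exact hσab (congrArg Prod.fst h)
          have hedge := hφedge _ _ hpair
          have hcolEq : blowup (dalmVB vbK R n) (dalmEC ecK R n) n (Sum.inl a, k)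
              (Sum.inl b, k') = blowup vbK ecK n (σ a.1, k) (σ b.1, k') := by
            simp only [blowup]
            rw [if_neg (by simp only [Sum.inl.injEq]; exact hab :
              ¬((Sum.inl a : dalmType V R n) = Sum.inl b)), if_neg hσab]
            · exact (hσec a.1 b.1 hab1).symm
          rw [hΦ1, hΦ1, hcolEq]
          exact hedge
    | Sum.inl a, Sum.inr ⟨x, i⟩ =>
        rw [hΦ1, hΦ2]
        have hax : a.1 ≠ x.1 := fun hEq => a.2 (hEq ▸ x.2)
        have hσax : σ a.1 ≠ σ x.1 := fun hEq => hax (hσinj hEq)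
        have hF := F1 _ _ k i hσax (grayK' _ _ hσax (by rw [hσw]; exact hRwhite x.1 x.2))
        apply mk_gray
        · simp only [blowup]
          rw [if_neg (by simp : ¬((Sum.inl a : dalmType V R n) = Sum.inr (x, i)))]
          exact grayK' a.1 x.1 hax (hRwhite x.1 x.2)
        · rw [sblow, if_neg hF.1]
          exact hF.2
    | Sum.inr ⟨x, i⟩, Sum.inl b =>
        rw [hΦ2, hΦ1]
        have hxb : x.1 ≠ b.1 := fun hEq => b.2 (hEq ▸ x.2)
        have hσxb : σ x.1 ≠ σ b.1 := fun hEq => hxb (hσinj hEq)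
        have hF := F1 _ _ i k' hσxb (grayK _ _ hσxb (by rw [hσw]; exact hRwhite x.1 x.2))
        apply mk_gray
        · simp only [blowup]
          rw [if_neg (by simp : ¬((Sum.inr (x, i) : dalmType V R n) = Sum.inl b))]
          exact grayK x.1 b.1 hxb (hRwhite x.1 x.2)
        · rw [sblow, if_neg hF.1]
          exact hF.2
    | Sum.inr ⟨x, i⟩, Sum.inr ⟨y, j⟩ =>
        rw [hΦ2, hΦ2]
        by_cases hxy : x = y
        · subst hxy
          by_cases hij : i = j
          · subst hij
            apply mk_black
            · simp [blowup, dalmVB]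
            · rw [sblow, if_pos rfl, hclsBlack x i]
              rfl
          · have hF := F2 (σ x.1) i j hij (by rw [hσw]; exact hRwhite x.1 x.2)
              (fun jj => hclsBlack x jj)
            apply mk_wg
            · simp only [blowup]
              rw [if_neg (by simp [hij] :
                ¬((Sum.inr (x, i) : dalmType V R n) = Sum.inr (x, j)))]
              simp [dalmEC]
            · rw [sblow, if_neg hF.1]
              exact hF.2
        · have hxy1 : x.1 ≠ y.1 := fun hEq => hxy (Subtype.ext hEq)
          have hσxy : σ x.1 ≠ σ y.1 := fun hEq => hxy1 (hσinj hEq)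
          have hF := F1 _ _ i j hσxy (grayK _ _ hσxy (by rw [hσw]; exact hRwhite x.1 x.2))
          apply mk_gray
          · simp only [blowup]
            rw [if_neg (by simp [hxy] :
              ¬((Sum.inr (x, i) : dalmType V R n) = Sum.inr (y, j)))]
            simp only [dalmEC]
            rw [if_neg hxy1]
            exact grayK x.1 y.1 hxy1 (hRwhite x.1 x.2)
          · rw [sblow, if_neg hF.1]
            exact hF.2
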